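/- arXiv:1509.01372 — 2 statements merged into one kernel-verified Lean document; each statement's English description precedes it below -/
import Mathlib

section
/- For G = ℤ with generating set {1}, F_ℤ(n) ≈ log n: specifically, for every nonzero integer g with |g| ≤ n there is a normal subgroup kℤ with g ∉ kℤ and k ≤ C·log n for some absolute constant C (for n large), and conversely for each n there exists g with |g| ≤ n such that every proper quotient ℤ/kℤ with g ∉ kℤ has k ≥ c·log n for some absolute constant c > 0. -/
open Finset

open Finset

private def LL (m : ℕ) : ℕ := (Finset.Icc 1 m).lcm id

private lemma LL_ne_zero (m : ℕ) : LL m ≠ 0 := by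
  intro h
  rw [LL, Finset.lcm_eq_zero_iff] at h
  obtain ⟨k, hk, hk0⟩ := h
  simp only [Finset.mem_coe, Finset.mem_Icc] at hk
  simp only [id] at hk0
  omega

private lemma dvd_LL {k m : ℕ} (h1 : 1 ≤ k) (h2 : k ≤ m) : k ∣ LL m :=
  Finset.dvd_lcm (Finset.mem_Icc.mpr ⟨h1, h2⟩)

private lemma centralBinom_dvd_LL {m : ℕ} (hm : 1 ≤ m) :
    Nat.centralBinom m ∣ LL (2 * m) := by
  rw [← Nat.factorization_le_iff_dvd (Nat.centralBinom_pos m).ne' (LL_ne_zero _)]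
  rw [Finsupp.le_def]
  intro p
  by_cases hp : p.Prime
  · set e := (Nat.centralBinom m).factorization p with he
    rcases Nat.eq_zero_or_pos e with h0 | hpos
    · simp [h0]
    have hle : p ^ e ≤ 2 * m := by
      rw [he, Nat.centralBinom]
      exact Nat.pow_factorization_choose_le (by omega)
    have hdvd : p ^ e ∣ LL (2 * m) :=
      dvd_LL (Nat.one_le_pow _ _ hp.pos) hle
    exact (Nat.Prime.pow_dvd_iff_le_factorization hp (LL_ne_zero _)).mp hdvd
  · simp [Nat.factorization_eq_zero_of_not_prime _ hp]




private lemma LL_dvd {m : ℕ} (hm : 1 ≤ m) :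
    LL m ∣ ∏ p ∈ (m + 1).primesBelow, p ^ Nat.log p m := by
  apply Finset.lcm_dvd
  intro k hk
  rw [Finset.mem_Icc] at hk
  have hk0 : k ≠ 0 := by omega
  have h1 : (k.factorization.prod fun p e => p ^ e) = k :=
    Nat.factorization_prod_pow_eq_self hk0
  rw [id_eq, ← h1, Finsupp.prod]
  refine dvd_trans (Finset.prod_dvd_prod_of_dvd _ (fun p => p ^ Nat.log p m) ?_)
    (Finset.prod_dvd_prod_of_subset _ _ _ ?_)
  · intro p hps
    rw [Nat.support_factorization] at hps
    have hp : p.Prime := Nat.prime_of_mem_primeFactors hps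
    apply pow_dvd_pow
    rw [Nat.le_log_iff_pow_le hp.one_lt (by omega)]
    exact le_trans (Nat.le_of_dvd (by omega) (Nat.ordProj_dvd k p)) hk.2
  · intro p hps
    rw [Nat.support_factorization] at hps
    have hp : p.Prime := Nat.prime_of_mem_primeFactors hps
    have : p ≤ k := Nat.le_of_dvd (by omega) (Nat.dvd_of_mem_primeFactors hps)
    exact Nat.mem_primesBelow.mpr ⟨by omega, hp⟩



private lemma log_le_two_sqrt {m : ℕ} (hm : 1 ≤ m) :
    Real.log m ≤ 2 * Real.sqrt m := by
  have h0 : (0:ℝ) < m := by exact_mod_cast hm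
  have h1 : Real.log m = 2 * Real.log (Real.sqrt m) := by
    rw [Real.log_sqrt h0.le]; ring
  have h2 : Real.log (Real.sqrt m) ≤ Real.sqrt m - 1 :=
    Real.log_le_sub_one_of_pos (Real.sqrt_pos.mpr h0)
  nlinarith [Real.sqrt_nonneg (m:ℝ)]

private lemma card_mul_log_le (m : ℕ) (hm : 1 ≤ m) :
    ((m + 1).primesBelow.card : ℝ) * Real.log m ≤ 10 * m := by
  set S := (m + 1).primesBelow with hS
  set s := Nat.sqrt m with hs
  set S₁ := S.filter (fun p => p ≤ s) with hS₁
  set S₂ := S.filter (fun p => ¬ p ≤ s) with hS₂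
  have hcard : S₁.card + S₂.card = S.card := Finset.card_filter_add_card_filter_not _
  have hm0 : (0:ℝ) < m := by exact_mod_cast hm
  have hsqrt_pos : (0:ℝ) < Real.sqrt m := Real.sqrt_pos.mpr hm0
  have hm1 : (1:ℝ) ≤ m := by exact_mod_cast hm
  have hlog0 : 0 ≤ Real.log m := Real.log_nonneg hm1
  -- S₁ bound
  have h1 : S₁.card ≤ s + 1 := by
    have : S₁ ⊆ Finset.range (s + 1) := by
      intro p hp
      rw [hS₁, Finset.mem_filter] at hp
      exact Finset.mem_range.mpr (by omega)
    simpa using Finset.card_le_card this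
  have hsle : (s : ℝ) ≤ Real.sqrt m := by
    rw [show (s:ℝ) = Real.sqrt ((s:ℝ)^2) by rw [Real.sqrt_sq (by positivity)]]
    apply Real.sqrt_le_sqrt
    exact_mod_cast Nat.sqrt_le' m
  have hsqrt_le : Real.sqrt m ≤ m := by
    rw [Real.sqrt_le_left hm0.le]
    nlinarith [hm1]
  have hS₁bound : (S₁.card : ℝ) * Real.log m ≤ 4 * m := by
    have h2 : (S₁.card : ℝ) ≤ Real.sqrt m + 1 := by
      calc (S₁.card : ℝ) ≤ (s:ℝ) + 1 := by exact_mod_cast h1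
      _ ≤ Real.sqrt m + 1 := by linarith
    calc (S₁.card : ℝ) * Real.log m ≤ (Real.sqrt m + 1) * (2 * Real.sqrt m) := by
          apply mul_le_mul h2 (log_le_two_sqrt hm) hlog0 (by positivity)
      _ = 2 * (Real.sqrt m * Real.sqrt m) + 2 * Real.sqrt m := by ring
      _ = 2 * m + 2 * Real.sqrt m := by rw [Real.mul_self_sqrt hm0.le]
      _ ≤ 4 * m := by linarith
  -- S₂ bound
  have hprodle : (∏ p ∈ S₂, (p:ℝ)) ≤ 4 ^ m := by
    have hdvd : (∏ p ∈ S₂, p) ≤ ∏ p ∈ S, p := by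
      apply Finset.prod_le_prod_of_subset_of_one_le' (Finset.filter_subset _ _)
      intro p hp _
      exact (Nat.prime_of_mem_primesBelow hp).one_lt.le
    have hprim : (∏ p ∈ S, p) = primorial m := rfl
    have : (∏ p ∈ S₂, p) ≤ 4 ^ m := by
      rw [← hprim] at *
      exact le_trans hdvd (by rw [hprim]; exact primorial_le_4_pow m)
    calc (∏ p ∈ S₂, (p:ℝ)) = ((∏ p ∈ S₂, p : ℕ) : ℝ) := by push_cast; ring
      _ ≤ ((4^m : ℕ) : ℝ) := by exact_mod_cast this
      _ = 4 ^ m := by push_cast; ring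
  have hpow : Real.sqrt m ^ S₂.card ≤ ∏ p ∈ S₂, (p:ℝ) := by
    rw [← Finset.prod_const]
    apply Finset.prod_le_prod (fun _ _ => hsqrt_pos.le)
    intro p hp
    rw [hS₂, Finset.mem_filter] at hp
    have : s + 1 ≤ p := by omega
    calc Real.sqrt m ≤ Real.sqrt (((s:ℝ)+1)^2) := by
          apply Real.sqrt_le_sqrt
          have h2 : m < (s + 1) * (s + 1) := by
            simpa [hs, Nat.succ_eq_add_one] using Nat.lt_succ_sqrt m
          have h3 : (m:ℝ) < ((s:ℝ) + 1) * ((s:ℝ) + 1) := by exact_mod_cast h2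
          nlinarith
      _ = (s:ℝ) + 1 := Real.sqrt_sq (by positivity)
      _ ≤ p := by exact_mod_cast this
  have hS₂bound : (S₂.card : ℝ) * Real.log m ≤ 6 * m := by
    have hlogle : (S₂.card : ℝ) * Real.log (Real.sqrt m) ≤ m * Real.log 4 := by
      have := Real.log_le_log (by positivity) (le_trans hpow hprodle)
      rwa [Real.log_pow, Real.log_pow] at this
    rw [Real.log_sqrt hm0.le] at hlogle
    have hlog4 : Real.log 4 ≤ 3 := le_trans (Real.log_le_sub_one_of_pos (by norm_num)) (by norm_num)
    nlinarith [Nat.cast_nonneg (α := ℝ) S₂.card, hm0]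
  calc ((S.card : ℝ)) * Real.log m = ((S₁.card : ℝ) + S₂.card) * Real.log m := by
        rw [← hcard]; push_cast; ring
    _ = (S₁.card : ℝ) * Real.log m + (S₂.card : ℝ) * Real.log m := by ring
    _ ≤ 4 * m + 6 * m := by linarith
    _ = 10 * m := by ring

private lemma LL_le_exp {m : ℕ} (hm : 1 ≤ m) : (LL m : ℝ) ≤ Real.exp (10 * m) := by
  have hnat : LL m ≤ m ^ (m + 1).primesBelow.card := by
    apply le_trans (Nat.le_of_dvd ?_ (LL_dvd hm))
    · calc (∏ p ∈ (m + 1).primesBelow, p ^ Nat.log p m)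
          ≤ ∏ _p ∈ (m + 1).primesBelow, m :=
            Finset.prod_le_prod' (fun p _ => Nat.pow_log_le_self p (by omega))
        _ = m ^ (m + 1).primesBelow.card := Finset.prod_const m
    · exact Finset.prod_pos fun p hp =>
        Nat.pow_pos (Nat.prime_of_mem_primesBelow hp).pos
  have hLLpos : 0 < LL m := Nat.pos_of_ne_zero (LL_ne_zero m)
  have h1 : Real.log (LL m) ≤ 10 * m := by
    calc Real.log (LL m) ≤ Real.log ((m : ℝ) ^ (m + 1).primesBelow.card) := by
          apply Real.log_le_log (by exact_mod_cast hLLpos)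
          exact_mod_cast hnat
      _ = ((m + 1).primesBelow.card : ℝ) * Real.log m := Real.log_pow _ _
      _ ≤ 10 * m := card_mul_log_le m hm
  calc (LL m : ℝ) = Real.exp (Real.log (LL m)) :=
        (Real.exp_log (by exact_mod_cast hLLpos)).symm
    _ ≤ Real.exp (10 * m) := Real.exp_le_exp.mpr h1

theorem rf_growth_int_log :
    (∃ C : ℝ, 0 < C ∧ ∃ N : ℕ, ∀ n : ℕ, N ≤ n → ∀ g : ℤ, g ≠ 0 → g.natAbs ≤ n →
        ∃ k : ℕ, 1 ≤ k ∧ ¬ ((k : ℤ) ∣ g) ∧ (k : ℝ) ≤ C * Real.log n) ∧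
      (∃ c : ℝ, 0 < c ∧ ∃ N : ℕ, ∀ n : ℕ, N ≤ n → ∃ g : ℤ, g ≠ 0 ∧ g.natAbs ≤ n ∧
        ∀ k : ℕ, 1 ≤ k → ¬ ((k : ℤ) ∣ g) → c * Real.log n ≤ (k : ℝ)) := by
  constructor
  · refine ⟨4, by norm_num, 16, fun n hn g hg hgn => ?_⟩
    set l := Nat.log 2 n with hl
    have hn0 : n ≠ 0 := by omega
    have hl4 : 4 ≤ l := by
      calc 4 = Nat.log 2 (2^4) := (Nat.log_pow one_lt_two 4).symm
        _ ≤ l := Nat.log_mono_right (by norm_num; omega)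
    set m := l + 1 with hm
    have key : ∃ k, 1 ≤ k ∧ k ≤ 2 * m ∧ ¬ (k:ℤ) ∣ g := by
      by_contra hcon
      push_neg at hcon
      have hLL : LL (2 * m) ∣ g.natAbs := by
        apply Finset.lcm_dvd
        intro k hk
        rw [Finset.mem_Icc] at hk
        exact Int.natCast_dvd.mp (hcon k hk.1 hk.2)
      have hgpos : 0 < g.natAbs := Int.natAbs_pos.mpr hg
      have h1 : LL (2 * m) ≤ n := le_trans (Nat.le_of_dvd hgpos hLL) hgn
      have h2 : Nat.centralBinom m ≤ n :=
        le_trans (Nat.le_of_dvd (Nat.pos_of_ne_zero (LL_ne_zero _))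
          (centralBinom_dvd_LL (by omega))) h1
      have h3 : 4 ^ m < m * Nat.centralBinom m :=
        Nat.four_pow_lt_mul_centralBinom m (by omega)
      have h4 : m ≤ n := by
        have e1 := Nat.pow_log_le_self 2 hn0
        have e2 := Nat.lt_two_pow_self (n := l)
        rw [← hl] at e1
        omega
      have h5 : n * n < 4 ^ m := by
        have hlt : n < 2 ^ (l + 1) := Nat.lt_pow_succ_log_self (by norm_num) n
        calc n * n < 2 ^ (l+1) * 2 ^ (l+1) := by
              exact Nat.mul_lt_mul_of_lt_of_le hlt hlt.le (by positivity)
          _ = 4 ^ m := by rw [hm, ← Nat.mul_pow]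
      have h6 : m * Nat.centralBinom m ≤ n * n := Nat.mul_le_mul h4 h2
      omega
    obtain ⟨k, hk1, hk2, hk3⟩ := key
    refine ⟨k, hk1, hk3, ?_⟩
    have hlog2 : (l:ℝ) * Real.log 2 ≤ Real.log n := by
      have h2l : (2:ℝ) ^ l ≤ n := by exact_mod_cast Nat.pow_log_le_self 2 hn0
      calc (l:ℝ) * Real.log 2 = Real.log ((2:ℝ) ^ l) := (Real.log_pow _ _).symm
        _ ≤ Real.log n := Real.log_le_log (by positivity) h2l
    have hlogn2 : 2 ≤ Real.log n := by
      have h16 : (16:ℝ) ≤ n := by exact_mod_cast hn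
      calc (2:ℝ) ≤ 4 * 0.6931471803 := by norm_num
        _ ≤ 4 * Real.log 2 := by nlinarith [Real.log_two_gt_d9]
        _ = Real.log ((2:ℝ) ^ (4:ℕ)) := by rw [Real.log_pow]; push_cast; ring
        _ ≤ Real.log n := Real.log_le_log (by positivity) (by norm_num; linarith)
    have hllog : (l:ℝ) ≤ 1.5 * Real.log n := by
      nlinarith [Real.log_two_gt_d9, Nat.cast_nonneg (α := ℝ) l]
    have hk2m : (k:ℝ) ≤ 2 * (l:ℝ) + 2 := by
      have : k ≤ 2 * l + 2 := by omega
      exact_mod_cast this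
    calc (k:ℝ) ≤ 2 * (l:ℝ) + 2 := hk2m
      _ ≤ 2 * (1.5 * Real.log n) + Real.log n := by linarith
      _ = 4 * Real.log n := by ring
  · refine ⟨1/32, by norm_num, 2^15, fun n hn => ?_⟩
    have hn' : 32768 ≤ n := by norm_num at hn; exact hn
    have hn0 : n ≠ 0 := by omega
    have hnR : (0:ℝ) < n := by exact_mod_cast Nat.pos_of_ne_zero hn0
    set l := Nat.log 2 n with hl
    have hl15 : 15 ≤ l := by
      calc 15 = Nat.log 2 (2^15) := (Nat.log_pow one_lt_two 15).symm
        _ ≤ l := Nat.log_mono_right hn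
    set m := l / 15 with hm
    have hm1 : 1 ≤ m := by rw [hm]; omega
    refine ⟨(LL m : ℤ), by exact_mod_cast LL_ne_zero m, ?_, ?_⟩
    · rw [Int.natAbs_natCast]
      have h1 : (LL m : ℝ) ≤ Real.exp (10 * m) := LL_le_exp hm1
      have h2 : (10:ℝ) * m ≤ Real.log n := by
        have ha : 15 * (m:ℝ) ≤ l := by
          have : 15 * m ≤ l := by rw [hm]; omega
          exact_mod_cast this
        have hb : (l:ℝ) * Real.log 2 ≤ Real.log n := by
          have h2l : (2:ℝ) ^ l ≤ n := by exact_mod_cast Nat.pow_log_le_self 2 hn0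
          calc (l:ℝ) * Real.log 2 = Real.log ((2:ℝ) ^ l) := (Real.log_pow _ _).symm
            _ ≤ Real.log n := Real.log_le_log (by positivity) h2l
        have hc : (0.6931471803 : ℝ) < Real.log 2 := Real.log_two_gt_d9
        nlinarith [Nat.cast_nonneg (α := ℝ) m, Nat.cast_nonneg (α := ℝ) l]
      have h3 : Real.exp (10 * m) ≤ n := by
        rw [← Real.exp_log hnR]
        exact Real.exp_le_exp.mpr h2
      exact_mod_cast h1.trans h3
    · intro k hk1 hdvd
      have hkm : m < k := by
        by_contra h
        push_neg at h
        exact hdvd (Int.natCast_dvd_natCast.mpr (dvd_LL hk1 h))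
      have ha : Real.log n ≤ ((l:ℝ) + 1) * Real.log 2 := by
        have hlt : (n:ℝ) ≤ (2:ℝ) ^ (l + 1) := by
          exact_mod_cast (Nat.lt_pow_succ_log_self (by norm_num) n).le
        calc Real.log n ≤ Real.log ((2:ℝ) ^ (l + 1)) := Real.log_le_log hnR hlt
          _ = ((l:ℝ) + 1) * Real.log 2 := by rw [Real.log_pow]; push_cast; ring
      have hlog2le : Real.log 2 ≤ 1 := by
        nlinarith [Real.log_le_sub_one_of_pos (show (0:ℝ) < 2 by norm_num)]
      have hb : (l:ℝ) + 1 ≤ 15 * k := by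
        have h15 : l < 15 * (m + 1) := by
          have h16 := Nat.div_add_mod l 15
          have h17 : l % 15 < 15 := Nat.mod_lt _ (by norm_num)
          omega
        have : l + 1 ≤ 15 * k := by omega
        exact_mod_cast this
      have hlognn : 0 ≤ Real.log n := Real.log_nonneg (by exact_mod_cast hn'.trans' (by norm_num))
      have hl0 : (0:ℝ) ≤ (l:ℝ) + 1 := by positivity
      have hk0 : (0:ℝ) ≤ k := Nat.cast_nonneg k
      nlinarith
end

section
/- Let d ≥ 2 be an integer and G a group acting on the set of vertices of the rooted d-regular tree (finite strings over an alphabet X with |X| = d), level-transitively. Suppose K ≤ G is a subgroup and there exists k ∈ K and a level i ≥ 0 such that k fixes all vertices of level i pointwise but moves some vertex of level i + 1, and suppose that for each j, 1 ≤ j ≤ d, there exists an element k_j ∈ K whose restriction at the j-th vertex of level 1 equals k and which acts trivially outside the subtree below that vertex. Then the index of the level-(i+2) stabilizer satisfies |G : St_G(i+2)| ≥ 2^d. -/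
/-- The pointwise stabilizer of all vertices of level `m` of the rooted `d`-regular tree,
for a group `G` acting on the tree via `φ`. Vertices are finite strings over `Fin d`. -/
def levelStab {G : Type*} [Group G] {d : ℕ} (φ : G →* Equiv.Perm (List (Fin d)))
    (m : ℕ) : Subgroup G where
  carrier := {g | ∀ v : List (Fin d), v.length = m → φ g v = v}
  one_mem' := by intro v hv; simp
  mul_mem' := by
    intro a b ha hb v hv
    rw [map_mul]
    simp only [Equiv.Perm.mul_apply]
    rw [hb v hv, ha v hv]
  inv_mem' := by
    intro a ha v hv
    rw [map_inv]
    exact (Equiv.Perm.inv_eq_iff_eq).mpr (ha v hv).symm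

theorem stab_index_lower_bound {G : Type*} [Group G] (d : ℕ) (hd : 2 ≤ d)
    (φ : G →* Equiv.Perm (List (Fin d)))
    -- the action preserves levels
    (hlen : ∀ (g : G) (v : List (Fin d)), (φ g v).length = v.length)
    -- the action preserves the tree structure (children go to children)
    (hpref : ∀ (g : G) (v : List (Fin d)) (x : Fin d),
      ∃ y : Fin d, φ g (v ++ [x]) = φ g v ++ [y])
    -- the action is level transitive
    (htrans : ∀ (m : ℕ) (v w : List (Fin d)), v.length = m → w.length = m →
      ∃ g : G, φ g v = w)
    (K : Subgroup G) (k : G) (hkK : k ∈ K) (i : ℕ)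
    -- k fixes all vertices of level i pointwise
    (hfix : k ∈ levelStab φ i)
    -- k moves some vertex of level i + 1
    (hmove : ∃ v : List (Fin d), v.length = i + 1 ∧ φ k v ≠ v)
    -- for each j there is an element of K acting as k on the j-th level-one subtree
    -- and trivially elsewhere
    (hcopies : ∀ j : Fin d, ∃ kj ∈ K,
      (∀ w : List (Fin d), φ kj (j :: w) = j :: φ k w) ∧
      (∀ v : List (Fin d), v.head? ≠ some j → φ kj v = v)) :
    2 ^ d ≤ (levelStab φ (i + 2)).index := by
  classical
  obtain ⟨v0, hv0, hkv0⟩ := hmove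
  choose kj hkjK hkj1 hkj2 using hcopies
  -- action of a product over a list of indices
  have key : ∀ (L : List (Fin d)) (j : Fin d) (v : List (Fin d)), L.Nodup →
      φ ((L.map kj).prod) (j :: v) = j :: (if j ∈ L then φ k v else v) := by
    intro L
    induction L with
    | nil => intro j v _; simp
    | cons a L ih =>
      intro j v hnd
      simp only [List.map_cons, List.prod_cons, map_mul, Equiv.Perm.mul_apply]
      rw [ih j v hnd.of_cons]
      by_cases hja : j = a
      · subst hja
        have hjL : j ∉ L := hnd.notMem
        simp only [hjL, if_false, List.mem_cons, true_or, if_true]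
        exact hkj1 j v
      · have h2 : ∀ w : List (Fin d), φ (kj a) (j :: w) = j :: w := by
          intro w
          apply hkj2 a
          simp [hja]
        rw [h2]
        simp [List.mem_cons, hja]
  -- the element associated to a finset
  set g : Finset (Fin d) → G := fun S => ((S.toList).map kj).prod with hg
  have hgact : ∀ (S : Finset (Fin d)) (j : Fin d) (v : List (Fin d)),
      φ (g S) (j :: v) = j :: (if j ∈ S then φ k v else v) := by
    intro S j v
    rw [hg]
    simpa using key S.toList j v S.nodup_toList
  -- the quotient is finite
  have hfin : Finite (G ⧸ levelStab φ (i + 2)) := by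
    let f : G ⧸ levelStab φ (i + 2) →
        (List.Vector (Fin d) (i + 2) → List.Vector (Fin d) (i + 2)) := by
      refine Quotient.lift (fun x v => ⟨φ x v.1, by rw [hlen]; exact v.2⟩) ?_
      intro a b hab
      have hab' : a⁻¹ * b ∈ levelStab φ (i + 2) := QuotientGroup.leftRel_apply.mp hab
      funext v
      have := hab' v.1 v.2
      simp only [map_mul, map_inv, Equiv.Perm.mul_apply] at this
      have : φ b v.1 = φ a v.1 := by
        have := congrArg (φ a) this
        simpa using this
      simp [this]
    apply Finite.of_injective f
    intro x y hxy
    induction x using QuotientGroup.induction_on with | H a =>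
    induction y using QuotientGroup.induction_on with | H b =>
    refine (QuotientGroup.eq).mpr ?_
    intro v hv
    have := congrFun hxy ⟨v, hv⟩
    have h2 : φ a v = φ b v := congrArg Subtype.val this
    simp only [map_mul, map_inv, Equiv.Perm.mul_apply]
    rw [← h2]
    simp
  -- injection from finsets into the quotient
  have hinj : Function.Injective
      (fun S : Finset (Fin d) => (QuotientGroup.mk (g S) : G ⧸ levelStab φ (i + 2))) := by
    intro S T hST
    have hmem : (g S)⁻¹ * g T ∈ levelStab φ (i + 2) := (QuotientGroup.eq).mp hST
    ext j
    have hlenj : (j :: v0).length = i + 2 := by simp [hv0]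
    have := hmem (j :: v0) hlenj
    simp only [map_mul, map_inv, Equiv.Perm.mul_apply] at this
    have heq : φ (g T) (j :: v0) = φ (g S) (j :: v0) := by
      have := congrArg (φ (g S)) this
      simpa using this
    rw [hgact, hgact] at heq
    by_cases hS : j ∈ S <;> by_cases hT : j ∈ T <;>
      simp [hS, hT] at heq ⊢ <;> tauto
  calc 2 ^ d = Nat.card (Finset (Fin d)) := by
        simp [Nat.card_eq_fintype_card]
    _ ≤ Nat.card (G ⧸ levelStab φ (i + 2)) := Nat.card_le_card_of_injective _ hinj
    _ = (levelStab φ (i + 2)).index := rfl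
end
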